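/- Let v, k, n, μ be natural numbers with n ≥ 1 and set λ = n * μ. Let B : ZMod n → Matrix (Fin v) (Fin v) ℤ be a family of (0,1)-matrices that are disjoint (for every cell (x, y) there is at most one g with (B g) x y = 1). Suppose (1) Σ_g (B g) * (B g)ᵀ = k • I + μ • (J - I) and (2) for every h ≠ 0 in ZMod n, Σ_g (B g) * (B (g - h))ᵀ = μ • (J - I), where I and J are the identity and all-ones matrices of order v. Define W : Fin v → Fin v → Option (ZMod n) by W x y = some g if (B g) x y = 1 (and W x y = none if no such g exists). Then W is a balanced generalized weighing matrix BGW(v, k, λ) over ℤ_n: every row of W has exactly k entries different from none, and for every pair of distinct rows i, j and every g ∈ ZMod n, the number of columns c with W i c = some a, W j c = some b and a - b = g equals μ. -/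

import Mathlib

open Matrix

/-- Disjoint `(0,1)`-matrices `B g` (`g ∈ ZMod n`) satisfying
`Σ_g (B g)(B g)ᵀ = k • I + μ • (J - I)` and, for `h ≠ 0`,
`Σ_g (B g)(B (g-h))ᵀ = μ • (J - I)`, give rise to a balanced generalized weighing matrix
`BGW(v, k, nμ)` over `ℤ_n` via `W x y = some g` iff `(B g) x y = 1`. -/
theorem stmt_11 (v k n μ : ℕ) [NeZero n]
    (B : ZMod n → Matrix (Fin v) (Fin v) ℤ)
    (hB01 : ∀ g i j, B g i j = 0 ∨ B g i j = 1)
    (hdisj : ∀ i j (g g' : ZMod n), B g i j = 1 → B g' i j = 1 → g = g')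
    (h1 : ∑ g : ZMod n, B g * (B g)ᵀ =
      (k : ℤ) • 1 + (μ : ℤ) • ((Matrix.of fun _ _ => (1 : ℤ)) - 1))
    (h2 : ∀ h : ZMod n, h ≠ 0 → ∑ g : ZMod n, B g * (B (g - h))ᵀ =
      (μ : ℤ) • ((Matrix.of fun _ _ => (1 : ℤ)) - 1))
    (W : Fin v → Fin v → Option (ZMod n))
    (hWdef : ∀ x y (g : ZMod n), W x y = some g ↔ B g x y = 1) :
    (∀ i, {c : Fin v | W i c ≠ none}.ncard = k) ∧
    ∀ i j : Fin v, i ≠ j → ∀ g : ZMod n,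
      {c : Fin v | ∃ a b : ZMod n, W i c = some a ∧ W j c = some b ∧ a - b = g}.ncard = μ := by
  classical
  have hzero : ∀ (g : ZMod n) i c, B g i c ≠ 1 → B g i c = 0 := by
    intro g i c h
    rcases hB01 g i c with h0 | h1' <;> tauto
  have hnone : ∀ (i c : Fin v), W i c = none → ∀ g : ZMod n, B g i c = 0 := by
    intro i c h g
    apply hzero
    intro h1'
    have := (hWdef i c g).mpr h1'
    rw [h] at this; exact absurd this (by simp)
  have honly : ∀ (i c : Fin v) (g0 : ZMod n), W i c = some g0 →
      ∀ g : ZMod n, g ≠ g0 → B g i c = 0 := by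
    intro i c g0 h g hg
    apply hzero
    intro h1'
    have := (hWdef i c g).mpr h1'
    rw [h] at this
    exact hg (Option.some_injective _ this).symm
  constructor
  · intro i
    have e1 : (∑ g : ZMod n, B g * (B g)ᵀ) i i = (k : ℤ) := by
      rw [h1]
      simp only [Matrix.add_apply, Matrix.smul_apply, Matrix.sub_apply,
        Matrix.one_apply_eq, Matrix.of_apply, smul_eq_mul]
      ring
    rw [Matrix.sum_apply] at e1
    simp only [Matrix.mul_apply, Matrix.transpose_apply] at e1
    rw [Finset.sum_comm] at e1
    have e2 : ∀ c : Fin v, ∑ g : ZMod n, B g i c * B g i c =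
        if W i c ≠ none then 1 else 0 := by
      intro c
      rcases h : W i c with _ | g0
      · rw [if_neg (by simp)]
        exact Finset.sum_eq_zero fun g _ => by rw [hnone i c h g]; ring
      · rw [if_pos (by simp)]
        rw [Finset.sum_eq_single_of_mem g0 (Finset.mem_univ g0)
          (fun g _ hg => by rw [honly i c g0 h g hg]; ring)]
        rw [(hWdef i c g0).mp h]; ring
    rw [Finset.sum_congr rfl (fun c _ => e2 c)] at e1
    have hset : {c : Fin v | W i c ≠ none} =
        ↑(Finset.univ.filter (fun c => W i c ≠ none)) := by
      ext c; simp
    rw [hset, Set.ncard_coe_finset]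
    have : ((Finset.univ.filter (fun c => W i c ≠ none)).card : ℤ) = (k : ℤ) := by
      rw [Finset.card_filter]
      push_cast
      rw [← e1]
    exact_mod_cast this
  · intro i j hij g
    have e1 : (∑ a : ZMod n, B a * (B (a - g))ᵀ) i j = (μ : ℤ) := by
      rcases eq_or_ne g 0 with hg | hg
      · subst hg
        simp only [sub_zero]
        rw [h1]
        simp only [Matrix.add_apply, Matrix.smul_apply, Matrix.sub_apply,
          Matrix.one_apply_ne hij, Matrix.of_apply, smul_eq_mul]
        ring
      · rw [h2 g hg]
        simp only [Matrix.smul_apply, Matrix.sub_apply,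
          Matrix.one_apply_ne hij, Matrix.of_apply, smul_eq_mul]
        ring
    rw [Matrix.sum_apply] at e1
    simp only [Matrix.mul_apply, Matrix.transpose_apply] at e1
    rw [Finset.sum_comm] at e1
    have e2 : ∀ c : Fin v, ∑ a : ZMod n, B a i c * B (a - g) j c =
        if (∃ a b : ZMod n, W i c = some a ∧ W j c = some b ∧ a - b = g)
        then 1 else 0 := by
      intro c
      rcases h : W i c with _ | a0
      · rw [if_neg]
        · exact Finset.sum_eq_zero fun a _ => by rw [hnone i c h a]; ring
        · rintro ⟨a, b, ha, -, -⟩; exact absurd ha (by simp)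
      · have hsum : ∑ a : ZMod n, B a i c * B (a - g) j c = B (a0 - g) j c := by
          rw [Finset.sum_eq_single_of_mem a0 (Finset.mem_univ a0)
            (fun a _ ha => by rw [honly i c a0 h a ha]; ring)]
          rw [(hWdef i c a0).mp h]; ring
        rw [hsum]
        rcases hB01 (a0 - g) j c with h0 | h1'
        · rw [h0, if_neg]
          rintro ⟨a, b, ha, hb, hab⟩
          have haa : a = a0 := (Option.some_injective _ ha).symm
          have hbb : b = a0 - g := by rw [haa] at hab; rw [← hab]; ring
          rw [hbb] at hb
          have := (hWdef j c (a0 - g)).mp hb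
          rw [h0] at this
          exact one_ne_zero this.symm
        · rw [h1', if_pos]
          exact ⟨a0, a0 - g, rfl, (hWdef j c (a0 - g)).mpr h1', by ring⟩
    rw [Finset.sum_congr rfl (fun c _ => e2 c)] at e1
    have hset : {c : Fin v | ∃ a b : ZMod n,
        W i c = some a ∧ W j c = some b ∧ a - b = g} =
        ↑(Finset.univ.filter (fun c => ∃ a b : ZMod n,
          W i c = some a ∧ W j c = some b ∧ a - b = g)) := by
      ext c; simp
    rw [hset, Set.ncard_coe_finset]
    have : ((Finset.univ.filter (fun c => ∃ a b : ZMod n,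
        W i c = some a ∧ W j c = some b ∧ a - b = g)).card : ℤ) = (μ : ℤ) := by
      rw [Finset.card_filter]
      push_cast
      rw [← e1]
    exact_mod_cast this
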